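/- If K is naturally ordered (the natural preorder ≼_K is antisymmetric), then the natural preorder ≼_T on coalesced temporal K-elements is antisymmetric: for all coalesced k, k', if k ≼_T k' and k' ≼_T k then k = k'. -/
import Mathlib


open scoped Classical

namespace TemporalK

variable {K : Type*}

/-- An interval over the time domain `{0, ..., N-1}`: a pair `(b, e)` with `b < e ≤ N`. -/
abbrev TInterval (N : ℕ) := {I : Fin (N + 1) × Fin (N + 1) // I.1 < I.2}

/-- A temporal `K`-element: a function assigning to each interval an element of `K`. -/
abbrev TempEl (N : ℕ) (K : Type*) := TInterval N → K

/-- The interval `I = (b, e)` contains the time point `T` iff `b ≤ T < e`. -/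
def Contains {N : ℕ} (I : TInterval N) (T : ℕ) : Prop :=
  (I.val.1 : ℕ) ≤ T ∧ T < (I.val.2 : ℕ)

/-- The timeslice of `𝒯` at time point `T`: the sum of `𝒯 I` over all intervals `I`
containing `T`. -/
noncomputable def slice {N : ℕ} [CommSemiring K] (𝒯 : TempEl N K) (T : ℕ) : K :=
  ∑ I ∈ Finset.univ.filter (fun I : TInterval N => Contains I T), 𝒯 I

/-- `T` is an (annotation) changepoint of `𝒯` iff `T = 0` or the timeslices at `T - 1`
and `T` differ. -/
def Changepoint {N : ℕ} [CommSemiring K] (𝒯 : TempEl N K) (T : ℕ) : Prop :=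
  T = 0 ∨ slice 𝒯 (T - 1) ≠ slice 𝒯 T

/-- `I = (b, e)` is a changepoint interval of `𝒯` iff `b` is a changepoint, `e` is a
changepoint or equals `N`, and no time point strictly between `b` and `e` is a changepoint. -/
def CPInterval {N : ℕ} [CommSemiring K] (𝒯 : TempEl N K) (I : TInterval N) : Prop :=
  Changepoint 𝒯 (I.val.1 : ℕ) ∧
    (Changepoint 𝒯 (I.val.2 : ℕ) ∨ (I.val.2 : ℕ) = N) ∧
    ∀ T : ℕ, (I.val.1 : ℕ) < T → T < (I.val.2 : ℕ) → ¬ Changepoint 𝒯 T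

/-- `K`-coalescing: maps changepoint intervals `(b, e)` to the timeslice at `b` and all
other intervals to `0`. -/
noncomputable def coal {N : ℕ} [CommSemiring K] (𝒯 : TempEl N K) : TempEl N K :=
  fun I => if CPInterval 𝒯 I then slice 𝒯 (I.val.1 : ℕ) else 0

/-- Snapshot equivalence: equal timeslices at every time point. -/
def SnapEq {N : ℕ} [CommSemiring K] (k k' : TempEl N K) : Prop :=
  ∀ T : ℕ, T < N → slice k T = slice k' T

/-- A temporal `K`-element is coalesced iff it is the `K`-coalescing of some
temporal `K`-element. -/
def Coalesced {N : ℕ} [CommSemiring K] (k : TempEl N K) : Prop :=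
  ∃ 𝒯 : TempEl N K, k = coal 𝒯

/-- Pointwise addition of temporal `K`-elements. -/
def padd {N : ℕ} [CommSemiring K] (k k' : TempEl N K) : TempEl N K :=
  fun I => k I + k' I

/-- Pointwise multiplication of temporal `K`-elements:
`(k ·_P k')(I) = Σ k(I')·k'(I'')` over all pairs `(I', I'')` whose intersection is
nonempty and equals `I`. -/
noncomputable def pmul {N : ℕ} [CommSemiring K] (k k' : TempEl N K) : TempEl N K :=
  fun I =>
    ∑ p ∈ Finset.univ.filter (fun p : TInterval N × TInterval N =>
        max (p.1.val.1 : ℕ) (p.2.val.1 : ℕ) < min (p.1.val.2 : ℕ) (p.2.val.2 : ℕ) ∧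
        (I.val.1 : ℕ) = max (p.1.val.1 : ℕ) (p.2.val.1 : ℕ) ∧
        (I.val.2 : ℕ) = min (p.1.val.2 : ℕ) (p.2.val.2 : ℕ)),
      k p.1 * k' p.2

/-- Addition of the period semiring: coalesced pointwise addition. -/
noncomputable def tadd {N : ℕ} [CommSemiring K] (k k' : TempEl N K) : TempEl N K :=
  coal (padd k k')

/-- Multiplication of the period semiring: coalesced pointwise multiplication. -/
noncomputable def tmul {N : ℕ} [CommSemiring K] (k k' : TempEl N K) : TempEl N K :=
  coal (pmul k k')

/-- The zero of the period semiring: maps every interval to `0`. -/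
def zeroT (N : ℕ) (K : Type*) [CommSemiring K] : TempEl N K := fun _ => 0

/-- The one of the period semiring: maps the interval `(0, N)` to `1` and every other
interval to `0`. -/
def oneT (N : ℕ) (K : Type*) [CommSemiring K] : TempEl N K :=
  fun I => if (I.val.1 : ℕ) = 0 ∧ (I.val.2 : ℕ) = N then 1 else 0

/-- Encoding of an annotation history `f : time points → K` as a coalesced temporal
`K`-element: coalesce the element assigning `f T` to each singleton interval `(T, T+1)`. -/
noncomputable def enc {N : ℕ} [CommSemiring K] (f : Fin N → K) : TempEl N K :=
  coal (fun I =>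
    if h : (I.val.2 : ℕ) = (I.val.1 : ℕ) + 1 then
      f ⟨(I.val.1 : ℕ), by have := I.val.2.isLt; omega⟩
    else 0)

/-- The natural preorder of the semiring `K`. -/
def nle [CommSemiring K] (a b : K) : Prop := ∃ c, a + c = b

/-- The natural preorder of the period semiring (on coalesced temporal `K`-elements). -/
def tle {N : ℕ} [CommSemiring K] (k k' : TempEl N K) : Prop :=
  ∃ k'' : TempEl N K, Coalesced k'' ∧ tadd k k'' = k'

/-- The pointwise monus: assigns `τ_T(k) −_K τ_T(k')` to each singleton interval
`(T, T+1)` and `0` to every non-singleton interval. -/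
noncomputable def pmonus {N : ℕ} [CommSemiring K] (monus : K → K → K)
    (k k' : TempEl N K) : TempEl N K :=
  fun I =>
    if (I.val.2 : ℕ) = (I.val.1 : ℕ) + 1 then
      monus (slice k (I.val.1 : ℕ)) (slice k' (I.val.1 : ℕ))
    else 0

/-- The monus of the period semiring: coalesced pointwise monus. -/
noncomputable def tmonus {N : ℕ} [CommSemiring K] (monus : K → K → K)
    (k k' : TempEl N K) : TempEl N K :=
  coal (pmonus monus k k')

end TemporalK

open TemporalK

namespace TemporalK
section Aux

variable {N : ℕ} {K : Type*} [CommSemiring K]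

private lemma slice_padd' (k k' : TempEl N K) (T : ℕ) :
    slice (padd k k') T = slice k T + slice k' T := by
  simp [slice, padd, Finset.sum_add_distrib]

private lemma slice_zero_of_ge (𝒯 : TempEl N K) {T : ℕ} (hT : N ≤ T) :
    slice 𝒯 T = 0 := by
  refine Finset.sum_eq_zero fun I hI => ?_
  rw [Finset.mem_filter] at hI
  have h2 := hI.2.2
  have h3 : (I.val.2 : ℕ) ≤ N := Fin.is_le _
  omega

private lemma slice_const (𝒯 : TempEl N K) {b T : ℕ} (hb : b ≤ T)
    (h : ∀ s, b < s → s ≤ T → ¬ Changepoint 𝒯 s) :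
    slice 𝒯 b = slice 𝒯 T := by
  induction T, hb using Nat.le_induction with
  | base => rfl
  | succ T hT ih =>
    have h1 := h (T + 1) (by omega) le_rfl
    rw [Changepoint] at h1
    push_neg at h1
    have h2 : slice 𝒯 T = slice 𝒯 (T + 1) := by simpa using h1.2
    rw [← h2]
    exact ih fun s hs1 hs2 => h s hs1 (by omega)

private lemma exists_cp (𝒯 : TempEl N K) {T : ℕ} (hT : T < N) :
    ∃ I : TInterval N, (CPInterval 𝒯 I ∧ Contains I T) ∧
      ∀ J : TInterval N, CPInterval 𝒯 J → Contains J T → J = I := by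
  classical
  set b := Nat.findGreatest (Changepoint 𝒯) T with hbdef
  have hb_le : b ≤ T := Nat.findGreatest_le T
  have hb_cp : Changepoint 𝒯 b := Nat.findGreatest_spec (Nat.zero_le T) (Or.inl rfl)
  have hb_max : ∀ s, b < s → s ≤ T → ¬ Changepoint 𝒯 s := fun s hs1 hs2 =>
    Nat.findGreatest_is_greatest hs1 hs2
  have hQ : ∃ e, T < e ∧ (Changepoint 𝒯 e ∨ e = N) := ⟨N, hT, Or.inr rfl⟩
  set e := Nat.find hQ with hedef
  have he : T < e ∧ (Changepoint 𝒯 e ∨ e = N) := Nat.find_spec hQ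
  have he_min : ∀ m, m < e → ¬(T < m ∧ (Changepoint 𝒯 m ∨ m = N)) :=
    fun m hm => Nat.find_min hQ hm
  have he_le : e ≤ N := Nat.find_min' hQ ⟨hT, Or.inr rfl⟩
  refine ⟨⟨(⟨b, by omega⟩, ⟨e, by omega⟩), by
      simp only [Fin.mk_lt_mk]; omega⟩, ⟨⟨hb_cp, he.2, ?_⟩, hb_le, he.1⟩, ?_⟩
  · intro s hs1 hs2 hcp
    by_cases hsT : s ≤ T
    · exact hb_max s hs1 hsT hcp
    · exact he_min s hs2 ⟨by omega, Or.inl hcp⟩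
  · rintro J ⟨hJ1, hJ2, hJ3⟩ hJc
    obtain ⟨hJl, hJr⟩ := hJc
    have hJe_le : (J.val.2 : ℕ) ≤ N := Fin.is_le _
    have hbb : (J.val.1 : ℕ) ≤ b := Nat.le_findGreatest hJl hJ1
    have hb_eq : (J.val.1 : ℕ) = b := by
      by_contra hne
      exact hJ3 b (by omega) (by omega) hb_cp
    have hee : e ≤ (J.val.2 : ℕ) := by
      by_contra hlt
      exact he_min (J.val.2 : ℕ) (by omega) ⟨hJr, hJ2⟩
    have he_eq : (J.val.2 : ℕ) = e := by
      by_contra hne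
      have hcp_e : Changepoint 𝒯 e := by
        rcases he.2 with h | h
        · exact h
        · omega
      exact hJ3 e (by omega) (by omega) hcp_e
    apply Subtype.ext
    apply Prod.ext <;> apply Fin.ext <;> simpa

private lemma slice_coal (𝒯 : TempEl N K) {T : ℕ} (hT : T < N) :
    slice (coal 𝒯) T = slice 𝒯 T := by
  obtain ⟨I, ⟨hcp, hcont⟩, huniq⟩ := exists_cp 𝒯 hT
  have hmem : I ∈ Finset.univ.filter (fun J : TInterval N => Contains J T) := by
    simp [hcont]
  rw [slice, Finset.sum_eq_single_of_mem I hmem]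
  · rw [coal]
    rw [if_pos hcp]
    exact slice_const 𝒯 hcont.1 fun s hs1 hs2 =>
      hcp.2.2 s hs1 (lt_of_le_of_lt hs2 hcont.2)
  · intro J hJ hne
    rw [Finset.mem_filter] at hJ
    rw [coal]
    split_ifs with h
    · exact absurd (huniq J h hJ.2) hne
    · rfl

private lemma coal_congr (𝒯 𝒯' : TempEl N K) (h : ∀ T, slice 𝒯 T = slice 𝒯' T) :
    coal 𝒯 = coal 𝒯' := by
  have hs : slice 𝒯 = slice 𝒯' := funext h
  have hcp : CPInterval 𝒯 = CPInterval 𝒯' := by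
    funext I
    unfold CPInterval Changepoint
    rw [hs]
  funext I
  simp only [coal, hcp, hs]

end Aux
end TemporalK

theorem tle_antisymm {N : ℕ} (hN : 1 ≤ N) {K : Type*} [CommSemiring K]
    (hanti : ∀ a b : K, nle a b → nle b a → a = b)
    (k k' : TempEl N K) (hk : Coalesced k) (hk' : Coalesced k')
    (h1 : tle k k') (h2 : tle k' k) :
    k = k' := by
  obtain ⟨𝒯, rfl⟩ := hk
  obtain ⟨𝒯', rfl⟩ := hk'
  obtain ⟨c1, -, hadd1⟩ := h1
  obtain ⟨c2, -, hadd2⟩ := h2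
  have key : ∀ T, T < N → slice (coal 𝒯) T = slice (coal 𝒯') T := by
    intro T hT
    apply hanti
    · refine ⟨TemporalK.slice c1 T, ?_⟩
      rw [← slice_padd', ← slice_coal (padd (coal 𝒯) c1) hT]
      exact congrArg (fun f => TemporalK.slice f T) hadd1
    · refine ⟨TemporalK.slice c2 T, ?_⟩
      rw [← slice_padd', ← slice_coal (padd (coal 𝒯') c2) hT]
      exact congrArg (fun f => TemporalK.slice f T) hadd2
  have h𝒯 : ∀ T, slice 𝒯 T = slice 𝒯' T := by
    intro T
    by_cases hT : T < N
    · rw [← slice_coal 𝒯 hT, ← slice_coal 𝒯' hT]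
      exact key T hT
    · rw [slice_zero_of_ge _ (le_of_not_gt hT), slice_zero_of_ge _ (le_of_not_gt hT)]
  exact coal_congr 𝒯 𝒯' h𝒯
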